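/- arXiv:2407.04891 — 2 statements merged into one kernel-verified Lean document; each statement's English description precedes it below -/
import Mathlib

section
/- Let S be a commutative ring and F a formal group law over S with formal inverse ι. Then there exists a unique power series g(x,y) ∈ S[[x,y]] such that x − y = (x −_F y)·g(x,y), and this g is an invertible element of S[[x,y]]. -/
/- Common setup: substitution of multivariate power series, formal group laws,
formal inverses, and the variable–swapping operation. -/

open MvPowerSeries Finsupp

noncomputable section

variable {S : Type*} [CommRing S]

/-- Substitution of a family of multivariate power series (each intended to have zero
constant coefficient) into a power series in `k` variables.  When every `a j` has zero
constant coefficient, the coefficient of a monomial `m` of the substituted series only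
receives contributions from exponents `d` with `d j ≤ deg m`, so the finite sum below
computes the genuine substitution. -/
noncomputable def msubst {k n : ℕ} (a : Fin k → MvPowerSeries (Fin n) S)
    (F : MvPowerSeries (Fin k) S) : MvPowerSeries (Fin n) S :=
  fun m =>
    ∑ d ∈ Finset.Iic (equivFunOnFinite.symm fun _ : Fin k => m.sum fun _ e => e),
      MvPowerSeries.coeff d F * MvPowerSeries.coeff m (∏ j, a j ^ d j)


variable {k n p : ℕ}

def TT (k N : ℕ) : Finset (Fin k →₀ ℕ) :=
  Finset.Iic (equivFunOnFinite.symm fun _ : Fin k => N)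

lemma mem_TT {N : ℕ} {d : Fin k →₀ ℕ} : d ∈ TT k N ↔ ∀ j, d j ≤ N := by
  simp [TT, Finset.mem_Iic, Finsupp.le_def]

lemma TT_mono {N M : ℕ} (h : N ≤ M) : TT k N ⊆ TT k M := fun d hd =>
  mem_TT.2 fun j => le_trans (mem_TT.1 hd j) h

lemma mem_TT_of_degree_le {N : ℕ} {d : Fin k →₀ ℕ} (h : degree d ≤ N) : d ∈ TT k N :=
  mem_TT.2 fun j => le_trans (le_degree j d) h

lemma coeff_msubst (a : Fin k → MvPowerSeries (Fin n) S) (F : MvPowerSeries (Fin k) S)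
    (m : Fin n →₀ ℕ) :
    MvPowerSeries.coeff m (msubst a F) =
      ∑ d ∈ TT k (degree m), MvPowerSeries.coeff d F * MvPowerSeries.coeff m (∏ j, a j ^ d j) :=
  rfl


lemma order_one_le {f : MvPowerSeries (Fin n) S}
    (hf : MvPowerSeries.constantCoeff (σ := Fin n) (R := S) f = 0) : 1 ≤ f.order := by
  apply MvPowerSeries.le_order
  intro d hd
  have : degree d = 0 := by
    by_contra h
    have : (1:ℕ∞) ≤ degree d := by
      exact_mod_cast Nat.one_le_iff_ne_zero.2 h
    exact absurd hd (not_lt.2 this)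
  rw [degree_eq_zero_iff] at this
  subst this
  exact hf

lemma order_pow_le {f : MvPowerSeries (Fin n) S}
    (hf : MvPowerSeries.constantCoeff (σ := Fin n) (R := S) f = 0) (e : ℕ) :
    (e : ℕ∞) ≤ (f ^ e).order := by
  induction e with
  | zero => simp
  | succ e ih =>
      rw [pow_succ]
      calc ((e+1 : ℕ) : ℕ∞) = (e : ℕ∞) + 1 := by push_cast; ring
      _ ≤ (f ^ e).order + f.order := add_le_add ih (order_one_le hf)
      _ ≤ ((f ^ e) * f).order := MvPowerSeries.le_order_mul

lemma order_prod_le {ι : Type*} (s : Finset ι) (f : ι → MvPowerSeries (Fin n) S)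
    (e : ι → ℕ) (h : ∀ i ∈ s, (e i : ℕ∞) ≤ (f i).order) :
    ((∑ i ∈ s, e i : ℕ) : ℕ∞) ≤ (∏ i ∈ s, f i).order := by
  classical
  induction s using Finset.cons_induction with
  | empty => simp
  | cons x s hx ih =>
      rw [Finset.sum_cons, Finset.prod_cons]
      calc ((e x + ∑ i ∈ s, e i : ℕ) : ℕ∞) = (e x : ℕ∞) + ((∑ i ∈ s, e i : ℕ) : ℕ∞) := by push_cast; ring
      _ ≤ (f x).order + (∏ i ∈ s, f i).order :=
          add_le_add (h x (Finset.mem_cons_self x s)) (ih fun i hi => h i (Finset.mem_cons_of_mem hi))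
      _ ≤ _ := MvPowerSeries.le_order_mul

/-- Key vanishing lemma. -/
lemma coeff_prod_pow_eq_zero {a : Fin k → MvPowerSeries (Fin n) S}
    (hc : ∀ j, MvPowerSeries.constantCoeff (σ := Fin n) (R := S) (a j) = 0)
    {d : Fin k →₀ ℕ} {m : Fin n →₀ ℕ} (h : degree m < degree d) :
    MvPowerSeries.coeff m (∏ j, a j ^ d j) = 0 := by
  apply MvPowerSeries.coeff_of_lt_order
  have h1 : ((∑ j, d j : ℕ) : ℕ∞) ≤ (∏ j, a j ^ d j).order :=
    order_prod_le _ _ _ (fun j _ => order_pow_le (hc j) (d j))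
  have h2 : degree d = ∑ j, d j :=
    Finset.sum_subset (Finset.subset_univ _) (fun i _ hi => Finsupp.notMem_support_iff.1 hi)
  calc ((degree m : ℕ) : ℕ∞) < ((degree d : ℕ) : ℕ∞) := by exact_mod_cast h
  _ = ((∑ j, d j : ℕ) : ℕ∞) := by rw [h2]
  _ ≤ _ := h1

section Infra
variable {a : Fin k → MvPowerSeries (Fin n) S}

lemma vanish_of_not_mem_TT (hc : ∀ j, MvPowerSeries.constantCoeff (σ := Fin n) (R := S) (a j) = 0)
    {d : Fin k →₀ ℕ} {m : Fin n →₀ ℕ} (hd : d ∉ TT k (degree m)) :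
    MvPowerSeries.coeff m (∏ j, a j ^ d j) = 0 := by
  have : ∃ j, degree m < (d : Fin k →₀ ℕ) j := by
    by_contra h
    push_neg at h
    exact hd (mem_TT.2 h)
  obtain ⟨j, hj⟩ := this
  exact coeff_prod_pow_eq_zero hc (lt_of_lt_of_le hj (le_degree j d))

lemma coeff_msubst_superset (hc : ∀ j, MvPowerSeries.constantCoeff (σ := Fin n) (R := S) (a j) = 0)
    (F : MvPowerSeries (Fin k) S) (m : Fin n →₀ ℕ) {U : Finset (Fin k →₀ ℕ)}
    (hU : TT k (degree m) ⊆ U) :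
    MvPowerSeries.coeff m (msubst a F) =
      ∑ d ∈ U, MvPowerSeries.coeff d F * MvPowerSeries.coeff m (∏ j, a j ^ d j) := by
  rw [coeff_msubst]
  exact Finset.sum_subset hU fun d _ hd => by rw [vanish_of_not_mem_TT hc hd, mul_zero]

lemma coeff_eval₂ (hc : ∀ j, MvPowerSeries.constantCoeff (σ := Fin n) (R := S) (a j) = 0)
    (P : MvPolynomial (Fin k) S) (m : Fin n →₀ ℕ) :
    MvPowerSeries.coeff m (MvPolynomial.eval₂ ((MvPowerSeries.C : S →+* MvPowerSeries (Fin n) S)) a P) =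
      ∑ d ∈ TT k (degree m), P.coeff d * MvPowerSeries.coeff m (∏ j, a j ^ d j) := by
  classical
  rw [MvPolynomial.eval₂_eq]
  have hterm : ∀ d : Fin k →₀ ℕ,
      MvPowerSeries.coeff m ((MvPowerSeries.C : S →+* MvPowerSeries (Fin n) S) (P.coeff d) * ∏ i ∈ d.support, a i ^ d i)
        = P.coeff d * MvPowerSeries.coeff m (∏ j, a j ^ d j) := by
    intro d
    have : (∏ i ∈ d.support, a i ^ d i) = ∏ j, a j ^ d j := by
      apply Finset.prod_subset (Finset.subset_univ _)
      intro i _ hi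
      rw [Finsupp.notMem_support_iff.1 hi, pow_zero]
    rw [this, MvPowerSeries.coeff_C_mul]
  rw [map_sum]
  simp only [hterm]
  rw [Finset.sum_subset (Finset.subset_union_left (s₁ := P.support) (s₂ := TT k (degree m)))
    (fun d _ hd => by rw [MvPolynomial.notMem_support_iff.1 hd, zero_mul]),
    Finset.sum_subset (Finset.subset_union_right (s₁ := P.support) (s₂ := TT k (degree m)))
    (fun d _ hd => by rw [vanish_of_not_mem_TT hc hd, mul_zero])]

def QT (N : ℕ) (F : MvPowerSeries (Fin k) S) : MvPolynomial (Fin k) S :=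
  ∑ d ∈ TT k N, MvPolynomial.monomial d (MvPowerSeries.coeff d F)

lemma coeff_QT {N : ℕ} {F : MvPowerSeries (Fin k) S} {d : Fin k →₀ ℕ} :
    (QT N F).coeff d = if d ∈ TT k N then MvPowerSeries.coeff d F else 0 := by
  classical
  simp [QT, MvPolynomial.coeff_sum, MvPolynomial.coeff_monomial]

lemma coeff_msubst_eq_eval₂ (hc : ∀ j, MvPowerSeries.constantCoeff (σ := Fin n) (R := S) (a j) = 0)
    {N : ℕ} {m : Fin n →₀ ℕ} (hN : degree m ≤ N) (F : MvPowerSeries (Fin k) S) :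
    MvPowerSeries.coeff m (msubst a F) =
      MvPowerSeries.coeff m (MvPolynomial.eval₂ ((MvPowerSeries.C : S →+* MvPowerSeries (Fin n) S)) a (QT N F)) := by
  rw [coeff_msubst, coeff_eval₂ hc]
  refine Finset.sum_congr rfl fun d hd => ?_
  rw [coeff_QT, if_pos (TT_mono hN hd)]

end Infra
section Hom
variable {a : Fin k → MvPowerSeries (Fin n) S}

lemma degree_add' (x y : Fin k →₀ ℕ) : degree (x + y) = degree x + degree y := by
  simp [degree_eq_weight_one, map_add]

lemma mem_TT_of_le {N : ℕ} {d e : Fin k →₀ ℕ} (h : e ≤ d) (hd : d ∈ TT k N) : e ∈ TT k N :=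
  mem_TT.2 fun j => le_trans (Finsupp.le_def.1 h j) (mem_TT.1 hd j)

lemma zero_mem_TT {N : ℕ} : (0 : Fin k →₀ ℕ) ∈ TT k N :=
  mem_TT.2 fun _ => Nat.zero_le _

lemma msubst_add' (F G : MvPowerSeries (Fin k) S) :
    msubst a (F + G) = msubst a F + msubst a G := by
  apply MvPowerSeries.ext; intro m
  rw [map_add, coeff_msubst, coeff_msubst, coeff_msubst, ← Finset.sum_add_distrib]
  exact Finset.sum_congr rfl fun d _ => by rw [map_add, add_mul]

lemma msubst_zero' : msubst a (0 : MvPowerSeries (Fin k) S) = 0 := by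
  apply MvPowerSeries.ext; intro m
  rw [coeff_msubst]
  simp

lemma msubst_one' : msubst a (1 : MvPowerSeries (Fin k) S) = 1 := by
  classical
  apply MvPowerSeries.ext; intro m
  rw [coeff_msubst, Finset.sum_eq_single 0]
  · simp
  · intro d _ hd
    rw [MvPowerSeries.coeff_one, if_neg hd, zero_mul]
  · exact fun h => absurd zero_mem_TT h

lemma msubst_mul' (hc : ∀ j, MvPowerSeries.constantCoeff (σ := Fin n) (R := S) (a j) = 0)
    (F G : MvPowerSeries (Fin k) S) :
    msubst a (F * G) = msubst a F * msubst a G := by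
  classical
  apply MvPowerSeries.ext; intro m
  set N := degree m with hNdef
  have h1 : MvPowerSeries.coeff m (msubst a (F * G)) =
      MvPowerSeries.coeff m
        (MvPolynomial.eval₂ ((MvPowerSeries.C : S →+* MvPowerSeries (Fin n) S)) a (QT N F * QT N G)) := by
    rw [coeff_msubst_eq_eval₂ hc (le_refl N), coeff_eval₂ hc, coeff_eval₂ hc]
    refine Finset.sum_congr rfl fun d hd => ?_
    congr 1
    rw [coeff_QT, if_pos hd, MvPowerSeries.coeff_mul, MvPolynomial.coeff_mul]
    refine Finset.sum_congr rfl fun p hp => ?_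
    have hsum : p.1 + p.2 = d := Finset.HasAntidiagonal.mem_antidiagonal.1 hp
    have h1 : p.1 ∈ TT k N := mem_TT_of_le (hsum ▸ le_add_right le_rfl) hd
    have h2 : p.2 ∈ TT k N := mem_TT_of_le (hsum ▸ le_add_left le_rfl) hd
    rw [coeff_QT, coeff_QT, if_pos h1, if_pos h2]
  rw [h1, MvPolynomial.eval₂_mul, MvPowerSeries.coeff_mul, MvPowerSeries.coeff_mul]
  refine (Finset.sum_congr rfl fun p hp => ?_).symm
  have hsum : p.1 + p.2 = m := Finset.HasAntidiagonal.mem_antidiagonal.1 hp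
  have hd1 : degree p.1 ≤ N := by
    rw [hNdef, ← hsum, degree_add']; exact Nat.le_add_right _ _
  have hd2 : degree p.2 ≤ N := by
    rw [hNdef, ← hsum, degree_add']; exact Nat.le_add_left _ _
  rw [coeff_msubst_eq_eval₂ hc hd1 F, coeff_msubst_eq_eval₂ hc hd2 G]

/-- `msubst a` as a ring homomorphism (when every `a j` has zero constant term). -/
def msubstHom (a : Fin k → MvPowerSeries (Fin n) S)
    (hc : ∀ j, MvPowerSeries.constantCoeff (σ := Fin n) (R := S) (a j) = 0) :
    MvPowerSeries (Fin k) S →+* MvPowerSeries (Fin n) S where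
  toFun := msubst a
  map_one' := msubst_one'
  map_mul' := msubst_mul' hc
  map_zero' := msubst_zero'
  map_add' := msubst_add'

@[simp] lemma msubstHom_apply (a : Fin k → MvPowerSeries (Fin n) S)
    (hc : ∀ j, MvPowerSeries.constantCoeff (σ := Fin n) (R := S) (a j) = 0)
    (F : MvPowerSeries (Fin k) S) : msubstHom a hc F = msubst a F := rfl

end Hom
section Xlemmas
variable {a : Fin k → MvPowerSeries (Fin n) S}

lemma prod_pow_single (i : Fin k) (e : ℕ) :
    (∏ j, a j ^ (Finsupp.single i e) j) = a i ^ e := by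
  classical
  rw [Finset.prod_eq_single i]
  · rw [Finsupp.single_eq_same]
  · intro j _ hj
    rw [Finsupp.single_eq_of_ne hj, pow_zero]
  · exact fun h => absurd (Finset.mem_univ i) h

lemma msubst_X (hc : ∀ j, MvPowerSeries.constantCoeff (σ := Fin n) (R := S) (a j) = 0) (i : Fin k) :
    msubst a (MvPowerSeries.X i) = a i := by
  classical
  apply MvPowerSeries.ext; intro m
  rw [coeff_msubst]
  by_cases hm : degree m = 0
  · have hm0 : m = 0 := (degree_eq_zero_iff m).1 hm
    subst hm0
    rw [Finset.sum_eq_zero, MvPowerSeries.coeff_zero_eq_constantCoeff_apply, hc i]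
    intro d hd
    have hd0 : d = 0 := by
      ext j
      simpa using le_trans (mem_TT.1 hd j) (le_of_eq hm)
    subst hd0
    rw [MvPowerSeries.X_def, MvPowerSeries.coeff_monomial,
      if_neg (by simp [eq_comm, Finsupp.single_eq_zero]), zero_mul]
  · have h1 : Finsupp.single i 1 ∈ TT k (degree m) := by
      refine mem_TT.2 fun j => ?_
      rcases eq_or_ne j i with rfl | hne
      · rw [Finsupp.single_eq_same]; exact Nat.one_le_iff_ne_zero.2 hm
      · rw [Finsupp.single_eq_of_ne hne]; exact Nat.zero_le _
    rw [Finset.sum_eq_single (Finsupp.single i 1)]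
    · rw [MvPowerSeries.X_def, MvPowerSeries.coeff_monomial, if_pos rfl, one_mul,
        prod_pow_single, pow_one]
    · intro d _ hd
      rw [MvPowerSeries.X_def, MvPowerSeries.coeff_monomial, if_neg hd, zero_mul]
    · exact fun h => absurd h1 h

lemma constantCoeff_msubst (F : MvPowerSeries (Fin k) S) :
    MvPowerSeries.constantCoeff (σ := Fin n) (R := S) (msubst a F) =
      MvPowerSeries.constantCoeff (σ := Fin k) (R := S) F := by
  classical
  rw [← MvPowerSeries.coeff_zero_eq_constantCoeff_apply, coeff_msubst,
    ← MvPowerSeries.coeff_zero_eq_constantCoeff_apply]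
  rw [Finset.sum_eq_single 0]
  · simp
  · intro d hd hne
    exact absurd (by ext j; simpa [map_zero] using mem_TT.1 hd j) hne
  · exact fun h => absurd zero_mem_TT h

lemma prod_monomial {ι : Type*} (s : Finset ι) (e : ι → (Fin k →₀ ℕ)) :
    (∏ i ∈ s, MvPowerSeries.monomial (e i) (1 : S)) =
      MvPowerSeries.monomial (∑ i ∈ s, e i) 1 := by
  classical
  induction s using Finset.cons_induction with
  | empty => simp [MvPowerSeries.monomial_zero_one]
  | cons x s hx ih =>
      rw [Finset.prod_cons, Finset.sum_cons, ih, MvPowerSeries.monomial_mul_monomial, one_mul]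

lemma prod_pow_X (d : Fin k →₀ ℕ) :
    (∏ j, (MvPowerSeries.X j : MvPowerSeries (Fin k) S) ^ d j) =
      MvPowerSeries.monomial d 1 := by
  classical
  have h1 : ∀ j : Fin k, (MvPowerSeries.X j : MvPowerSeries (Fin k) S) ^ d j =
      MvPowerSeries.monomial (Finsupp.single j (d j)) 1 := fun j => MvPowerSeries.X_pow_eq j (d j)
  simp_rw [h1]
  rw [_root_.prod_monomial]
  have h2 : ∑ j ∈ Finset.univ, Finsupp.single j (d j) = ∑ j ∈ d.support, Finsupp.single j (d j) :=
    (Finset.sum_subset (Finset.subset_univ _)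
      (fun i _ hi => by rw [Finsupp.notMem_support_iff.1 hi, Finsupp.single_zero])).symm
  have h3 : (∑ j ∈ Finset.univ, Finsupp.single j (d j)) = d := by
    rw [h2]; exact d.sum_single
  rw [h3]

lemma msubst_self (f : MvPowerSeries (Fin k) S) :
    msubst (fun j : Fin k => (MvPowerSeries.X j : MvPowerSeries (Fin k) S)) f = f := by
  classical
  apply MvPowerSeries.ext; intro m
  rw [coeff_msubst]
  rw [Finset.sum_eq_single m]
  · rw [prod_pow_X, MvPowerSeries.coeff_monomial, if_pos rfl, mul_one]
  · intro d _ hd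
    rw [prod_pow_X, MvPowerSeries.coeff_monomial, if_neg (fun h => hd h.symm), mul_zero]
  · exact fun h => absurd (mem_TT_of_degree_le le_rfl) h

end Xlemmas
section Comp

lemma degree_eq_sum_univ (e : Fin n →₀ ℕ) : degree e = ∑ i, e i :=
  Finset.sum_subset (Finset.subset_univ _) (fun i _ hi => Finsupp.notMem_support_iff.1 hi)

lemma msubst_msubst {p : ℕ} (a : Fin k → MvPowerSeries (Fin n) S)
    (b : Fin n → MvPowerSeries (Fin p) S)
    (ha : ∀ j, MvPowerSeries.constantCoeff (σ := Fin n) (R := S) (a j) = 0)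
    (hb : ∀ j, MvPowerSeries.constantCoeff (σ := Fin p) (R := S) (b j) = 0)
    (f : MvPowerSeries (Fin k) S) :
    msubst b (msubst a f) = msubst (fun j => msubst b (a j)) f := by
  classical
  apply MvPowerSeries.ext; intro m
  set N := degree m with hN
  set M := n * N + N with hM
  have hNM : N ≤ M := Nat.le_add_left _ _
  have hprod : ∀ d : Fin k →₀ ℕ,
      msubst b (∏ j, a j ^ d j) = ∏ j, (msubst b (a j)) ^ d j := by
    intro d
    rw [show msubst b (∏ j, a j ^ d j) = msubstHom b hb (∏ j, a j ^ d j) from rfl,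
      map_prod]
    exact Finset.prod_congr rfl fun j _ => map_pow _ _ _
  have hstep : ∀ e ∈ TT n N, MvPowerSeries.coeff e (msubst a f) =
      ∑ d ∈ TT k M, MvPowerSeries.coeff d f * MvPowerSeries.coeff e (∏ j, a j ^ d j) := by
    intro e he
    apply coeff_msubst_superset ha
    apply TT_mono
    calc degree e = ∑ i, e i := degree_eq_sum_univ e
    _ ≤ ∑ _i : Fin n, N := Finset.sum_le_sum fun i _ => mem_TT.1 he i
    _ = n * N := by rw [Finset.sum_const, Finset.card_univ, Fintype.card_fin, smul_eq_mul]
    _ ≤ M := Nat.le_add_right _ _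
  have hvanish : ∀ d ∈ TT k M, d ∉ TT k N →
      MvPowerSeries.coeff m (msubst b (∏ j, a j ^ d j)) = 0 := by
    intro d _ hd
    have hj : ∃ j, N < d j := by
      by_contra h; push_neg at h; exact hd (mem_TT.2 h)
    obtain ⟨j, hj⟩ := hj
    rw [coeff_msubst]
    apply Finset.sum_eq_zero
    intro e _
    by_cases hdeg : degree e ≤ N
    · rw [coeff_prod_pow_eq_zero ha
        (lt_of_le_of_lt hdeg (lt_of_lt_of_le hj (le_degree j d))), zero_mul]
    · rw [coeff_prod_pow_eq_zero hb (by rw [← hN]; exact lt_of_not_ge hdeg), mul_zero]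
  calc MvPowerSeries.coeff m (msubst b (msubst a f))
      = ∑ e ∈ TT n N, MvPowerSeries.coeff e (msubst a f) *
          MvPowerSeries.coeff m (∏ j, b j ^ e j) := coeff_msubst _ _ _
    _ = ∑ e ∈ TT n N, ∑ d ∈ TT k M, MvPowerSeries.coeff d f *
          MvPowerSeries.coeff e (∏ j, a j ^ d j) *
          MvPowerSeries.coeff m (∏ j, b j ^ e j) := by
        refine Finset.sum_congr rfl fun e he => ?_
        rw [hstep e he, Finset.sum_mul]
    _ = ∑ d ∈ TT k M, MvPowerSeries.coeff d f *
          ∑ e ∈ TT n N, MvPowerSeries.coeff e (∏ j, a j ^ d j) *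
          MvPowerSeries.coeff m (∏ j, b j ^ e j) := by
        rw [Finset.sum_comm]
        refine Finset.sum_congr rfl fun d _ => ?_
        rw [Finset.mul_sum]
        exact Finset.sum_congr rfl fun e _ => by ring
    _ = ∑ d ∈ TT k M, MvPowerSeries.coeff d f *
          MvPowerSeries.coeff m (msubst b (∏ j, a j ^ d j)) := by
        refine Finset.sum_congr rfl fun d _ => ?_
        rw [coeff_msubst]
    _ = ∑ d ∈ TT k N, MvPowerSeries.coeff d f *
          MvPowerSeries.coeff m (msubst b (∏ j, a j ^ d j)) := by
        symm
        exact Finset.sum_subset (TT_mono hNM)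
          (fun d hdM hdN => by rw [hvanish d hdM hdN, mul_zero])
    _ = MvPowerSeries.coeff m (msubst (fun j => msubst b (a j)) f) := by
        rw [coeff_msubst]
        exact Finset.sum_congr rfl fun d _ => by rw [hprod]

end Comp
section FinHelpers

lemma hc1 {u : MvPowerSeries (Fin n) S}
    (hu : MvPowerSeries.constantCoeff (σ := Fin n) (R := S) u = 0) :
    ∀ j : Fin 1, MvPowerSeries.constantCoeff (σ := Fin n) (R := S) (![u] j) = 0 := by
  intro j
  fin_cases j
  · exact hu

lemma hc2 {u v : MvPowerSeries (Fin n) S}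
    (hu : MvPowerSeries.constantCoeff (σ := Fin n) (R := S) u = 0)
    (hv : MvPowerSeries.constantCoeff (σ := Fin n) (R := S) v = 0) :
    ∀ j : Fin 2, MvPowerSeries.constantCoeff (σ := Fin n) (R := S) (![u, v] j) = 0 := by
  intro j
  fin_cases j
  · exact hu
  · exact hv

lemma hc3 {u v w : MvPowerSeries (Fin n) S}
    (hu : MvPowerSeries.constantCoeff (σ := Fin n) (R := S) u = 0)
    (hv : MvPowerSeries.constantCoeff (σ := Fin n) (R := S) v = 0)
    (hw : MvPowerSeries.constantCoeff (σ := Fin n) (R := S) w = 0) :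
    ∀ j : Fin 3, MvPowerSeries.constantCoeff (σ := Fin n) (R := S) (![u, v, w] j) = 0 := by
  intro j
  fin_cases j
  · exact hu
  · exact hv
  · exact hw

lemma comp1 {p : ℕ} {c : Fin n → MvPowerSeries (Fin p) S}
    (hcc : ∀ j, MvPowerSeries.constantCoeff (σ := Fin p) (R := S) (c j) = 0)
    {u : MvPowerSeries (Fin n) S}
    (hu : MvPowerSeries.constantCoeff (σ := Fin n) (R := S) u = 0)
    (f : MvPowerSeries (Fin 1) S) :
    msubst c (msubst ![u] f) = msubst ![msubst c u] f := by
  rw [msubst_msubst ![u] c (hc1 hu) hcc f]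
  congr 1
  funext j; fin_cases j <;> rfl

lemma comp2 {p : ℕ} {c : Fin n → MvPowerSeries (Fin p) S}
    (hcc : ∀ j, MvPowerSeries.constantCoeff (σ := Fin p) (R := S) (c j) = 0)
    {u v : MvPowerSeries (Fin n) S}
    (hu : MvPowerSeries.constantCoeff (σ := Fin n) (R := S) u = 0)
    (hv : MvPowerSeries.constantCoeff (σ := Fin n) (R := S) v = 0)
    (f : MvPowerSeries (Fin 2) S) :
    msubst c (msubst ![u, v] f) = msubst ![msubst c u, msubst c v] f := by
  rw [msubst_msubst ![u, v] c (hc2 hu hv) hcc f]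
  congr 1
  funext j; fin_cases j <;> rfl

lemma pair_X0 {u v : MvPowerSeries (Fin n) S}
    (hu : MvPowerSeries.constantCoeff (σ := Fin n) (R := S) u = 0)
    (hv : MvPowerSeries.constantCoeff (σ := Fin n) (R := S) v = 0) :
    msubst ![u, v] (MvPowerSeries.X 0) = u := by
  rw [msubst_X (hc2 hu hv) 0]
  exact rfl

lemma pair_X1 {u v : MvPowerSeries (Fin n) S}
    (hu : MvPowerSeries.constantCoeff (σ := Fin n) (R := S) u = 0)
    (hv : MvPowerSeries.constantCoeff (σ := Fin n) (R := S) v = 0) :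
    msubst ![u, v] (MvPowerSeries.X 1) = v := by
  rw [msubst_X (hc2 hu hv) 1]
  exact rfl

lemma pair_self (f : MvPowerSeries (Fin 2) S) :
    msubst ![(MvPowerSeries.X 0 : MvPowerSeries (Fin 2) S), MvPowerSeries.X 1] f = f := by
  rw [show (![(MvPowerSeries.X 0 : MvPowerSeries (Fin 2) S), MvPowerSeries.X 1]) =
      (fun j : Fin 2 => MvPowerSeries.X j) from by funext j; fin_cases j <;> rfl]
  exact msubst_self f

end FinHelpers

/-- `F ∈ S[[x,y]]` is a (one-dimensional, commutative) formal group law over `S`: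
zero constant coefficient, commutativity `F(x,y) = F(y,x)`, unitality `F(x,0) = x`,
and associativity `F(F(x,y),z) = F(x,F(y,z))`. -/
def IsFormalGroupLaw (F : MvPowerSeries (Fin 2) S) : Prop :=
  MvPowerSeries.constantCoeff F = 0 ∧
  msubst ![(X 1 : MvPowerSeries (Fin 2) S), X 0] F = F ∧
  msubst ![(X 0 : MvPowerSeries (Fin 2) S), 0] F = X 0 ∧
  msubst ![msubst ![(X 0 : MvPowerSeries (Fin 3) S), X 1] F, X 2] F
    = msubst ![(X 0 : MvPowerSeries (Fin 3) S), msubst ![(X 1 : MvPowerSeries (Fin 3) S), X 2] F] F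

/-- `ι ∈ S[[x]]` is the formal inverse of `F`: it has zero constant coefficient
and `F(x, ι(x)) = 0`. -/
def IsFormalInverse (F : MvPowerSeries (Fin 2) S) (ι : MvPowerSeries (Fin 1) S) : Prop :=
  MvPowerSeries.constantCoeff ι = 0 ∧
  msubst ![(X 0 : MvPowerSeries (Fin 1) S), ι] F = 0

/-- `ι(b)`, the substitution of `b` into the formal inverse `ι`. -/
noncomputable def fneg (ι : MvPowerSeries (Fin 1) S) {n : ℕ}
    (b : MvPowerSeries (Fin n) S) : MvPowerSeries (Fin n) S :=
  msubst ![b] ι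

/-- `a −_F b := F(a, ι(b))`. -/
noncomputable def fsub (F : MvPowerSeries (Fin 2) S) (ι : MvPowerSeries (Fin 1) S) {n : ℕ}
    (a b : MvPowerSeries (Fin n) S) : MvPowerSeries (Fin n) S :=
  msubst ![a, fneg ι b] F

/-- Substitution `g(a,b)` of two power series into a two-variable power series `g`. -/
noncomputable def gsub (g : MvPowerSeries (Fin 2) S) {n : ℕ}
    (a b : MvPowerSeries (Fin n) S) : MvPowerSeries (Fin n) S :=
  msubst ![a, b] g

/-- The map on multivariate power series interchanging the variables `x_i` and `x_j`
(the renaming along the transposition `(i,j)`). -/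
def swapVars {n : ℕ} (i j : Fin n) (f : MvPowerSeries (Fin n) S) :
    MvPowerSeries (Fin n) S :=
  fun m => f (equivMapDomain (Equiv.swap i j) m)


section FGLFacts
open MvPowerSeries
variable {F : MvPowerSeries (Fin 2) S} {ι : MvPowerSeries (Fin 1) S}

lemma ccX {i : Fin n} : MvPowerSeries.constantCoeff (σ := Fin n) (R := S) (MvPowerSeries.X i) = 0 :=
  MvPowerSeries.constantCoeff_X i

lemma cc0 : MvPowerSeries.constantCoeff (σ := Fin n) (R := S) 0 = 0 := map_zero _

lemma cc_fneg (hι : IsFormalInverse F ι) :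
    MvPowerSeries.constantCoeff (σ := Fin 2) (R := S) (fneg ι (X 1)) = 0 :=
  (constantCoeff_msubst ι).trans hι.1

/-- `F(y, ι(y)) = 0` as a series in two variables. -/
lemma inv2 (hι : IsFormalInverse F ι) :
    msubst ![(X 1 : MvPowerSeries (Fin 2) S), fneg ι (X 1)] F = 0 := by
  have h := congrArg (msubst ![(X 1 : MvPowerSeries (Fin 2) S)]) hι.2
  rwa [msubst_zero', comp2 (hc1 ccX) ccX hι.1, msubst_X (hc1 ccX) 0,
    show (![(X 1 : MvPowerSeries (Fin 2) S)] 0) = X 1 from rfl] at h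

/-- Commutativity, substituted. -/
lemma swap2 (hF : IsFormalGroupLaw F) {u v : MvPowerSeries (Fin 2) S}
    (hu : MvPowerSeries.constantCoeff (σ := Fin 2) (R := S) u = 0)
    (hv : MvPowerSeries.constantCoeff (σ := Fin 2) (R := S) v = 0) :
    msubst ![u, v] F = msubst ![v, u] F := by
  have h := congrArg (msubst ![u, v]) hF.2.1
  rw [comp2 (hc2 hu hv) ccX ccX, pair_X1 hu hv, pair_X0 hu hv] at h
  exact h.symm

lemma inv2' (hF : IsFormalGroupLaw F) (hι : IsFormalInverse F ι) :
    msubst ![fneg ι (X 1), (X 1 : MvPowerSeries (Fin 2) S)] F = 0 := by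
  rw [swap2 hF (cc_fneg hι) ccX]
  exact inv2 hι

/-- `F(x, 0) = x` with the roles swapped : `F(0, y) = y`. -/
lemma unit0 (hF : IsFormalGroupLaw F) :
    msubst ![(0 : MvPowerSeries (Fin 2) S), X 1] F = X 1 := by
  have h1 : msubst ![(X 1 : MvPowerSeries (Fin 2) S), 0] F = X 1 := by
    have h := congrArg (msubst ![(X 1 : MvPowerSeries (Fin 2) S), 0]) hF.2.2.1
    rwa [comp2 (hc2 ccX cc0) ccX cc0, pair_X0 ccX cc0, msubst_zero'] at h
  rw [swap2 hF cc0 ccX]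
  exact h1

/-- Fact 1 : `F(F(x,y), ι(y)) = x`. -/
lemma F_nu (hF : IsFormalGroupLaw F) (hι : IsFormalInverse F ι) :
    msubst ![F, fneg ι (X 1)] F = (X 0 : MvPowerSeries (Fin 2) S) := by
  have hν := cc_fneg hι
  have h := congrArg (msubst ![(X 0 : MvPowerSeries (Fin 2) S), X 1, fneg ι (X 1)]) hF.2.2.2
  have hccc := hc3 (ccX (i := (0 : Fin 2))) (ccX (i := (1 : Fin 2))) hν
  have hG1 : MvPowerSeries.constantCoeff (σ := Fin 3) (R := S)
      (msubst ![(X 0 : MvPowerSeries (Fin 3) S), X 1] F) = 0 :=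
    (constantCoeff_msubst F).trans hF.1
  have hG2 : MvPowerSeries.constantCoeff (σ := Fin 3) (R := S)
      (msubst ![(X 1 : MvPowerSeries (Fin 3) S), X 2] F) = 0 :=
    (constantCoeff_msubst F).trans hF.1
  rw [comp2 hccc hG1 ccX, comp2 hccc ccX hG2,
      comp2 hccc ccX ccX, comp2 hccc ccX ccX] at h
  rw [msubst_X hccc 0, msubst_X hccc 1, msubst_X hccc 2] at h
  rw [show (![(X 0 : MvPowerSeries (Fin 2) S), X 1, fneg ι (X 1)] 0) = X 0 from rfl,
      show (![(X 0 : MvPowerSeries (Fin 2) S), X 1, fneg ι (X 1)] 1) = X 1 from rfl,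
      show (![(X 0 : MvPowerSeries (Fin 2) S), X 1, fneg ι (X 1)] 2) = fneg ι (X 1) from rfl] at h
  rw [pair_self, inv2 hι, hF.2.2.1] at h
  exact h

/-- Fact 2 : `F(F(x, ι(y)), y) = x`. -/
lemma D_X1 (hF : IsFormalGroupLaw F) (hι : IsFormalInverse F ι) :
    msubst ![msubst ![(X 0 : MvPowerSeries (Fin 2) S), fneg ι (X 1)] F, X 1] F
      = (X 0 : MvPowerSeries (Fin 2) S) := by
  have hν := cc_fneg hι
  have h := congrArg (msubst ![(X 0 : MvPowerSeries (Fin 2) S), fneg ι (X 1), X 1]) hF.2.2.2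
  have hccc := hc3 (ccX (i := (0 : Fin 2))) hν (ccX (i := (1 : Fin 2)))
  have hG1 : MvPowerSeries.constantCoeff (σ := Fin 3) (R := S)
      (msubst ![(X 0 : MvPowerSeries (Fin 3) S), X 1] F) = 0 :=
    (constantCoeff_msubst F).trans hF.1
  have hG2 : MvPowerSeries.constantCoeff (σ := Fin 3) (R := S)
      (msubst ![(X 1 : MvPowerSeries (Fin 3) S), X 2] F) = 0 :=
    (constantCoeff_msubst F).trans hF.1
  rw [comp2 hccc hG1 ccX, comp2 hccc ccX hG2,
      comp2 hccc ccX ccX, comp2 hccc ccX ccX] at h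
  rw [msubst_X hccc 0, msubst_X hccc 1, msubst_X hccc 2] at h
  rw [show (![(X 0 : MvPowerSeries (Fin 2) S), fneg ι (X 1), X 1] 0) = X 0 from rfl,
      show (![(X 0 : MvPowerSeries (Fin 2) S), fneg ι (X 1), X 1] 1) = fneg ι (X 1) from rfl,
      show (![(X 0 : MvPowerSeries (Fin 2) S), fneg ι (X 1), X 1] 2) = X 1 from rfl] at h
  rw [inv2' hF hι, hF.2.2.1] at h
  exact h

end FGLFacts

section Coeffs
open MvPowerSeries
variable {F : MvPowerSeries (Fin 2) S} {ι : MvPowerSeries (Fin 1) S}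

lemma phi_nu (hF : IsFormalGroupLaw F) :
    msubst ![F, (X 1 : MvPowerSeries (Fin 2) S)] (fneg ι (X 1)) = fneg ι (X 1) := by
  have h := comp1 (c := ![F, (X 1 : MvPowerSeries (Fin 2) S)]) (hc2 hF.1 ccX) (ccX (i := (1 : Fin 2))) ι
  rw [pair_X1 hF.1 ccX] at h
  exact h

lemma phiD (hF : IsFormalGroupLaw F) (hι : IsFormalInverse F ι) :
    msubst ![F, (X 1 : MvPowerSeries (Fin 2) S)]
      (msubst ![(X 0 : MvPowerSeries (Fin 2) S), fneg ι (X 1)] F) = X 0 := by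
  rw [comp2 (hc2 hF.1 ccX) ccX (cc_fneg hι), pair_X0 hF.1 ccX, phi_nu hF, F_nu hF hι]

lemma psi_phi (hF : IsFormalGroupLaw F) (hι : IsFormalInverse F ι)
    (g : MvPowerSeries (Fin 2) S) :
    msubst ![msubst ![(X 0 : MvPowerSeries (Fin 2) S), fneg ι (X 1)] F, X 1]
      (msubst ![F, (X 1 : MvPowerSeries (Fin 2) S)] g) = g := by
  have hD0 : MvPowerSeries.constantCoeff (σ := Fin 2) (R := S)
      (msubst ![(X 0 : MvPowerSeries (Fin 2) S), fneg ι (X 1)] F) = 0 :=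
    (constantCoeff_msubst F).trans hF.1
  rw [comp2 (hc2 hD0 ccX) hF.1 ccX, D_X1 hF hι, pair_X1 hD0 ccX, pair_self]

lemma coeff_msubst_zero_X1 (f : MvPowerSeries (Fin 2) S) {m : Fin 2 →₀ ℕ} (hm0 : m 0 = 0) :
    MvPowerSeries.coeff m (msubst ![0, (X 1 : MvPowerSeries (Fin 2) S)] f) =
      MvPowerSeries.coeff m f := by
  classical
  have hprod : ∀ d : Fin 2 →₀ ℕ,
      (∏ j, (![(0 : MvPowerSeries (Fin 2) S), X 1] j) ^ d j)
        = (0 : MvPowerSeries (Fin 2) S) ^ (d 0) * (X 1 : MvPowerSeries (Fin 2) S) ^ (d 1) := by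
    intro d; rw [Fin.prod_univ_two]; rfl
  have hm : m = Finsupp.single 1 (m 1) := by
    ext j; fin_cases j
    · simpa using hm0
    · simp
  rw [coeff_msubst, Finset.sum_eq_single (Finsupp.single 1 (m 1))]
  · have h0 : (Finsupp.single (1 : Fin 2) (m 1)) 0 = 0 := Finsupp.single_eq_of_ne (by decide)
    have h1 : (Finsupp.single (1 : Fin 2) (m 1)) 1 = m 1 := Finsupp.single_eq_same
    rw [hprod, h0, h1, pow_zero, one_mul, MvPowerSeries.X_pow_eq, MvPowerSeries.coeff_monomial,
      if_pos hm, mul_one, ← hm]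
  · intro d hd hne
    by_cases h0 : d 0 = 0
    · have hd1 : d = Finsupp.single 1 (d 1) := by
        ext j; fin_cases j
        · simpa using h0
        · simp
      rw [hprod, h0, pow_zero, one_mul, MvPowerSeries.X_pow_eq, MvPowerSeries.coeff_monomial,
        if_neg, mul_zero]
      intro heq
      apply hne
      have : m 1 = d 1 := by
        have := congrArg (fun g : Fin 2 →₀ ℕ => g 1) (hm.symm.trans heq)
        simpa using this
      rw [hd1, ← this]
    · rw [hprod, zero_pow h0, zero_mul, map_zero, mul_zero]
  · intro hnot
    exfalso; apply hnot
    refine mem_TT.2 fun j => ?_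
    fin_cases j
    · simp
    · simpa using le_degree (1 : Fin 2) m

lemma exists_div (f : MvPowerSeries (Fin 2) S)
    (h : msubst ![0, (X 1 : MvPowerSeries (Fin 2) S)] f = 0) :
    ∃ h₁ : MvPowerSeries (Fin 2) S, f = (X 0) * h₁ := by
  classical
  refine ⟨@id (MvPowerSeries (Fin 2) S) (fun e => f (e + Finsupp.single 0 1)), ?_⟩
  apply MvPowerSeries.ext; intro m
  rw [MvPowerSeries.X_def, MvPowerSeries.coeff_monomial_mul]
  by_cases hle : Finsupp.single (0 : Fin 2) 1 ≤ m
  · rw [if_pos hle, one_mul]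
    show MvPowerSeries.coeff m f = f ((m - Finsupp.single 0 1) + Finsupp.single 0 1)
    rw [tsub_add_cancel_of_le hle]
    rfl
  · rw [if_neg hle]
    have hm0 : m 0 = 0 := by
      by_contra hm0
      exact hle (Finsupp.single_le_iff.2 (Nat.one_le_iff_ne_zero.2 hm0))
    rw [← coeff_msubst_zero_X1 f hm0, h, map_zero]

lemma coeff_single01_F (hF : IsFormalGroupLaw F) :
    MvPowerSeries.coeff (Finsupp.single (0 : Fin 2) 1) F = 1 := by
  classical
  have h := congrArg (MvPowerSeries.coeff (Finsupp.single (0 : Fin 2) 1)) hF.2.2.1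
  rw [coeff_msubst] at h
  have hprod : ∀ d : Fin 2 →₀ ℕ,
      (∏ j, (![(X 0 : MvPowerSeries (Fin 2) S), 0] j) ^ d j)
        = (X 0 : MvPowerSeries (Fin 2) S) ^ (d 0) * (0 : MvPowerSeries (Fin 2) S) ^ (d 1) := by
    intro d; rw [Fin.prod_univ_two]; rfl
  have h0 : (Finsupp.single (0 : Fin 2) 1) 0 = 1 := Finsupp.single_eq_same
  have h1 : (Finsupp.single (0 : Fin 2) 1) 1 = 0 := Finsupp.single_eq_of_ne (by decide)
  rw [Finset.sum_eq_single (Finsupp.single (0 : Fin 2) 1)] at h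
  · rw [hprod, h0, h1, pow_zero, mul_one, pow_one] at h
    rw [MvPowerSeries.X_def, MvPowerSeries.coeff_monomial, if_pos rfl, mul_one] at h
    exact h
  · intro d hd hne
    by_cases hd1 : d 1 = 0
    · have hdd : d = Finsupp.single 0 (d 0) := by
        ext j; fin_cases j
        · simp
        · simpa using hd1
      rw [hprod, hd1, pow_zero, mul_one, MvPowerSeries.X_pow_eq, MvPowerSeries.coeff_monomial,
        if_neg, mul_zero]
      intro heq
      apply hne
      have : (1 : ℕ) = d 0 := by
        have := congrArg (fun g : Fin 2 →₀ ℕ => g 0) heq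
        simpa using this
      rw [hdd, ← this]
    · rw [hprod, zero_pow hd1, mul_zero, map_zero, mul_zero]
  · intro hnot
    exfalso; apply hnot
    refine mem_TT.2 fun j => ?_
    fin_cases j
    · simpa [h0] using le_degree (0 : Fin 2) (Finsupp.single (0 : Fin 2) 1)
    · simp [h1]

lemma X0_cancel {u v : MvPowerSeries (Fin 2) S}
    (h : (MvPowerSeries.X 0 : MvPowerSeries (Fin 2) S) * u = MvPowerSeries.X 0 * v) :
    u = v := by
  classical
  apply MvPowerSeries.ext; intro m
  have h2 := congrArg (MvPowerSeries.coeff (m + Finsupp.single 0 1)) h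
  simp only [MvPowerSeries.X_def, MvPowerSeries.coeff_monomial_mul] at h2
  have hle : Finsupp.single (0 : Fin 2) 1 ≤ m + Finsupp.single 0 1 := le_add_self
  rw [if_pos hle, if_pos hle, one_mul, one_mul, add_tsub_cancel_right] at h2
  exact h2

end Coeffs


/-- there is a unique power series `g(x,y) ∈ S[[x,y]]` with
`x − y = (x −_F y)·g(x,y)`, and this `g` is invertible. -/
theorem exists_unique_g_and_isUnit
    (F : MvPowerSeries (Fin 2) S) (hF : IsFormalGroupLaw F)
    (ι : MvPowerSeries (Fin 1) S) (hι : IsFormalInverse F ι) :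
    (∃! g : MvPowerSeries (Fin 2) S,
        (X 0 : MvPowerSeries (Fin 2) S) - X 1 = fsub F ι (X 0) (X 1) * g) ∧
    (∀ g : MvPowerSeries (Fin 2) S,
        (X 0 : MvPowerSeries (Fin 2) S) - X 1 = fsub F ι (X 0) (X 1) * g → IsUnit g) := by
  classical
  have hν : MvPowerSeries.constantCoeff (σ := Fin 2) (R := S) (fneg ι (X 1)) = 0 := cc_fneg hι
  have hD0 : MvPowerSeries.constantCoeff (σ := Fin 2) (R := S)
      (msubst ![(X 0 : MvPowerSeries (Fin 2) S), fneg ι (X 1)] F) = 0 :=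
    (constantCoeff_msubst F).trans hF.1
  have hfsub : fsub F ι (X 0) (X 1) =
      msubst ![(X 0 : MvPowerSeries (Fin 2) S), fneg ι (X 1)] F := rfl
  have hψ := hc2 hD0 (ccX (i := (1 : Fin 2)))
  have hφ := hc2 hF.1 (ccX (i := (1 : Fin 2)))
  -- divisibility of F - X 1 by X 0
  have hsub0 : msubst ![0, (X 1 : MvPowerSeries (Fin 2) S)] (F - MvPowerSeries.X 1) = 0 := by
    have e : msubst ![0, (X 1 : MvPowerSeries (Fin 2) S)] (F - MvPowerSeries.X 1)
        = msubst ![0, (X 1 : MvPowerSeries (Fin 2) S)] F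
          - msubst ![0, (X 1 : MvPowerSeries (Fin 2) S)] (MvPowerSeries.X 1) :=
      map_sub (msubstHom ![0, (X 1 : MvPowerSeries (Fin 2) S)] (hc2 cc0 ccX)) _ _
    rw [e, unit0 hF, pair_X1 cc0 ccX, sub_self]
  obtain ⟨h, hh⟩ := exists_div _ hsub0
  have hhc : MvPowerSeries.constantCoeff (σ := Fin 2) (R := S) h = 1 := by
    have h2 := congrArg (MvPowerSeries.coeff (Finsupp.single (0 : Fin 2) 1)) hh
    rw [map_sub, coeff_single01_F hF] at h2
    rw [MvPowerSeries.X_def (1 : Fin 2), MvPowerSeries.coeff_monomial, if_neg (by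
      intro heq
      have := congrArg (fun g : Fin 2 →₀ ℕ => g 0) heq
      simp [Finsupp.single_eq_of_ne] at this)] at h2
    rw [MvPowerSeries.X_def (0 : Fin 2), MvPowerSeries.coeff_monomial_mul,
      if_pos le_rfl, one_mul, tsub_self, MvPowerSeries.coeff_zero_eq_constantCoeff_apply] at h2
    rw [sub_zero] at h2
    exact h2.symm
  have hhu : IsUnit h :=
    IsUnit.of_mul_eq_one _ (MvPowerSeries.mul_invOfUnit h 1 (by simpa using hhc))
  -- the candidate g₀
  have hgoal : (X 0 : MvPowerSeries (Fin 2) S) - X 1 =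
      msubst ![(X 0 : MvPowerSeries (Fin 2) S), fneg ι (X 1)] F *
        msubst ![msubst ![(X 0 : MvPowerSeries (Fin 2) S), fneg ι (X 1)] F, X 1] h := by
    have e1 : msubst ![msubst ![(X 0 : MvPowerSeries (Fin 2) S), fneg ι (X 1)] F, X 1]
        (F - MvPowerSeries.X 1)
        = msubst ![msubst ![(X 0 : MvPowerSeries (Fin 2) S), fneg ι (X 1)] F, X 1] F
          - msubst ![msubst ![(X 0 : MvPowerSeries (Fin 2) S), fneg ι (X 1)] F, X 1]
              (MvPowerSeries.X 1) :=
      map_sub (msubstHom _ hψ) _ _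
    rw [hh] at e1
    rw [msubst_mul' hψ, pair_X0 hD0 ccX, pair_X1 hD0 ccX, D_X1 hF hι] at e1
    exact e1.symm
  have huniq : ∀ g : MvPowerSeries (Fin 2) S,
      (X 0 : MvPowerSeries (Fin 2) S) - X 1 =
        msubst ![(X 0 : MvPowerSeries (Fin 2) S), fneg ι (X 1)] F * g →
      g = msubst ![msubst ![(X 0 : MvPowerSeries (Fin 2) S), fneg ι (X 1)] F, X 1] h := by
    intro g hg
    have e2 : msubst ![(X 0 : MvPowerSeries (Fin 2) S), fneg ι (X 1)] F * g =
        msubst ![(X 0 : MvPowerSeries (Fin 2) S), fneg ι (X 1)] F *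
          msubst ![msubst ![(X 0 : MvPowerSeries (Fin 2) S), fneg ι (X 1)] F, X 1] h := by
      rw [← hg, hgoal]
    have h3 := congrArg (msubst ![F, (X 1 : MvPowerSeries (Fin 2) S)]) e2
    rw [msubst_mul' hφ, msubst_mul' hφ, phiD hF hι] at h3
    have h4 := X0_cancel h3
    have h5 := congrArg
      (msubst ![msubst ![(X 0 : MvPowerSeries (Fin 2) S), fneg ι (X 1)] F, X 1]) h4
    rw [psi_phi hF hι, psi_phi hF hι] at h5
    exact h5
  constructor
  · refine ⟨msubst ![msubst ![(X 0 : MvPowerSeries (Fin 2) S), fneg ι (X 1)] F, X 1] h,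
      by rw [hfsub]; exact hgoal, fun g hg => huniq g (by rw [hfsub] at hg; exact hg)⟩
  · intro g hg
    rw [huniq g (by rw [hfsub] at hg; exact hg)]
    exact hhu.map (msubstHom ![msubst ![(X 0 : MvPowerSeries (Fin 2) S), fneg ι (X 1)] F, X 1] hψ)

end
end

section
/- Let S be a commutative ring, F a formal group law over S, n ≥ 2, and 1 ≤ i ≤ n−1. Then the element x_i −_F x_{i+1} is a non-zero-divisor (regular element) of the multivariate power series ring R = S[[x_1,…,x_n]]. -/
/- Common setup: substitution of multivariate power series, formal group laws,
formal inverses, and the variable–swapping operation. -/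

open MvPowerSeries Finsupp

noncomputable section

variable {S : Type*} [CommRing S]

theorem aux_coeff_pow {n : ℕ} {a : MvPowerSeries (Fin n) S}
    (ha : MvPowerSeries.constantCoeff a = 0) {m : Fin n →₀ ℕ} {k : ℕ}
    (h : m.degree < k) : MvPowerSeries.coeff m (a ^ k) = 0 := by
  have h1 : (1 : ℕ∞) ≤ a.order := by
    apply MvPowerSeries.le_order
    intro d hd
    have hd0 : d.degree = 0 := by
      by_contra hne
      have : (1:ℕ∞) ≤ (d.degree : ℕ∞) := by
        exact_mod_cast Nat.one_le_iff_ne_zero.mpr hne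
      exact absurd hd (not_lt.mpr this)
    have : d = 0 := (Finsupp.degree_eq_zero_iff d).mp hd0
    simpa [this] using ha
  have hk : ∀ k : ℕ, (k : ℕ∞) ≤ (a ^ k).order := by
    intro k
    induction k with
    | zero => simp
    | succ k ih =>
      have := MvPowerSeries.le_order_mul (f := a) (g := a ^ k)
      calc ((k+1 : ℕ) : ℕ∞) = 1 + (k : ℕ∞) := by push_cast; ring
        _ ≤ a.order + (a ^ k).order := add_le_add h1 ih
        _ ≤ (a * a ^ k).order := MvPowerSeries.le_order_mul
        _ = (a ^ (k+1)).order := by rw [← pow_succ'];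
  apply MvPowerSeries.coeff_of_lt_order
  calc (m.degree : ℕ∞) < (k : ℕ∞) := by exact_mod_cast h
    _ ≤ _ := hk k
theorem aux_fin2_eq (d : Fin 2 →₀ ℕ) : d = single 0 (d 0) + single 1 (d 1) := by
  apply Finsupp.ext; intro s; fin_cases s <;> simp [Finsupp.single_apply]

theorem aux_fin1_eq (d : Fin 1 →₀ ℕ) : d = single 0 (d 0) := by
  apply Finsupp.ext; intro s
  have h : s = 0 := Fin.fin_one_eq_zero s
  subst h; simp

theorem aux_sum_Iic2 {M : Type*} [AddCommMonoid M] (N : ℕ) (G : (Fin 2 →₀ ℕ) → M) :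
    ∑ d ∈ Finset.Iic (equivFunOnFinite.symm fun _ : Fin 2 => N), G d
      = ∑ p ∈ Finset.range (N+1), ∑ q ∈ Finset.range (N+1), G (single 0 p + single 1 q) := by
  rw [← Finset.sum_product']
  apply Finset.sum_nbij' (i := fun d => (d 0, d 1)) (j := fun p => single 0 p.1 + single 1 p.2)
  · intro d hd
    rw [Finset.mem_Iic, Finsupp.le_def] at hd
    simp only [Finset.mem_product, Finset.mem_range, Nat.lt_succ_iff]
    exact ⟨by simpa using hd 0, by simpa using hd 1⟩
  · rintro ⟨p, q⟩ hpq
    simp only [Finset.mem_product, Finset.mem_range, Nat.lt_succ_iff] at hpq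
    rw [Finset.mem_Iic, Finsupp.le_def]
    intro s
    have : (equivFunOnFinite.symm fun _ : Fin 2 => N) s = N := rfl
    rw [this]
    fin_cases s <;> simp [Finsupp.single_apply] <;> omega
  · intro d _; exact (aux_fin2_eq d).symm
  · rintro ⟨p, q⟩ _; simp [Finsupp.single_apply]
  · intro d _; exact congrArg G (aux_fin2_eq d)

theorem aux_sum_Iic1 {M : Type*} [AddCommMonoid M] (N : ℕ) (G : (Fin 1 →₀ ℕ) → M) :
    ∑ d ∈ Finset.Iic (equivFunOnFinite.symm fun _ : Fin 1 => N), G d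
      = ∑ p ∈ Finset.range (N+1), G (single 0 p) := by
  apply Finset.sum_nbij' (i := fun d => d 0) (j := fun p => single 0 p)
  · intro d hd
    rw [Finset.mem_Iic, Finsupp.le_def] at hd
    simp only [Finset.mem_range, Nat.lt_succ_iff]
    simpa using hd 0
  · intro p hp
    simp only [Finset.mem_range, Nat.lt_succ_iff] at hp
    rw [Finset.mem_Iic, Finsupp.le_def]
    intro s
    have h : s = 0 := Fin.fin_one_eq_zero s
    subst h; simpa using hp
  · intro d _; exact (aux_fin1_eq d).symm
  · intro p _; simp
  · intro d _; exact congrArg G (aux_fin1_eq d)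

theorem aux_msubst_coeff2 {n : ℕ} (a : Fin 2 → MvPowerSeries (Fin n) S)
    (F : MvPowerSeries (Fin 2) S) (m : Fin n →₀ ℕ) :
    MvPowerSeries.coeff m (msubst a F)
      = ∑ p ∈ Finset.range (m.degree + 1), ∑ q ∈ Finset.range (m.degree + 1),
          MvPowerSeries.coeff (single 0 p + single 1 q) F
            * MvPowerSeries.coeff m (a 0 ^ p * a 1 ^ q) := by
  have : MvPowerSeries.coeff m (msubst a F)
      = ∑ d ∈ Finset.Iic (equivFunOnFinite.symm fun _ : Fin 2 => m.degree),
          MvPowerSeries.coeff d F * MvPowerSeries.coeff m (∏ j, a j ^ d j) := rfl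
  rw [this, aux_sum_Iic2]
  apply Finset.sum_congr rfl; intro p _
  apply Finset.sum_congr rfl; intro q _
  congr 1
  rw [Fin.prod_univ_two]
  simp [Finsupp.single_apply]

theorem aux_msubst_coeff1 {n : ℕ} (a : Fin 1 → MvPowerSeries (Fin n) S)
    (F : MvPowerSeries (Fin 1) S) (m : Fin n →₀ ℕ) :
    MvPowerSeries.coeff m (msubst a F)
      = ∑ p ∈ Finset.range (m.degree + 1),
          MvPowerSeries.coeff (single 0 p) F * MvPowerSeries.coeff m (a 0 ^ p) := by
  have : MvPowerSeries.coeff m (msubst a F)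
      = ∑ d ∈ Finset.Iic (equivFunOnFinite.symm fun _ : Fin 1 => m.degree),
          MvPowerSeries.coeff d F * MvPowerSeries.coeff m (∏ j, a j ^ d j) := rfl
  rw [this, aux_sum_Iic1]
  apply Finset.sum_congr rfl; intro p _
  congr 1
  rw [Fin.prod_univ_one]
  simp

theorem aux_fneg_coeff {n : ℕ} (ι : MvPowerSeries (Fin 1) S)
    (hι1 : MvPowerSeries.constantCoeff ι = 0) (j : Fin n) (m : Fin n →₀ ℕ) :
    MvPowerSeries.coeff m (fneg ι (X j))
      = if m = single j (m j) then MvPowerSeries.coeff (single 0 (m j)) ι else 0 := by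
  rw [fneg, aux_msubst_coeff1]
  have hXj : ∀ p : ℕ, (MvPowerSeries.coeff m) ((![(X j : MvPowerSeries (Fin n) S)]) 0 ^ p)
      = if m = single j p then 1 else 0 := by
    intro p
    simp only [Matrix.cons_val_zero]
    rw [MvPowerSeries.X_pow_eq, MvPowerSeries.coeff_monomial]
  by_cases hm : m = single j (m j)
  · rw [if_pos hm]
    rw [Finset.sum_eq_single (m j)]
    · rw [hXj, if_pos hm, mul_one]
    · intro p _ hp
      rw [hXj]
      rw [if_neg, mul_zero]
      intro h
      exact hp (by rw [h]; simp [Finsupp.single_apply])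
    · intro h
      exfalso
      exact h (Finset.mem_range.mpr (Nat.lt_succ_of_le (Finsupp.le_degree j m)))
  · rw [if_neg hm]
    apply Finset.sum_eq_zero
    intro p _
    rw [hXj, if_neg, mul_zero]
    intro h
    exact hm (by rw [h]; simp [Finsupp.single_apply])

theorem aux_single_add_decomp {n : ℕ} {j : Fin n} {b : ℕ} {u v : Fin n →₀ ℕ}
    (h : u + v = single j b) : u = single j (u j) ∧ v = single j (v j) ∧ u j + v j = b := by
  have hs : ∀ s, u s + v s = (single j b : Fin n →₀ ℕ) s := by
    intro s; rw [← h]; simp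
  refine ⟨?_, ?_, ?_⟩
  · apply Finsupp.ext; intro s
    rcases eq_or_ne s j with rfl | hsj
    · simp
    · have := hs s
      rw [Finsupp.single_apply, if_neg (Ne.symm hsj)] at this ⊢
      omega
  · apply Finsupp.ext; intro s
    rcases eq_or_ne s j with rfl | hsj
    · simp
    · have := hs s
      rw [Finsupp.single_apply, if_neg (Ne.symm hsj)] at this ⊢
      omega
  · have := hs j
    simpa using this

theorem aux_fneg_pow {n : ℕ} (ι : MvPowerSeries (Fin 1) S)
    (hι1 : MvPowerSeries.constantCoeff ι = 0) (j : Fin n) (k : ℕ) (m : Fin n →₀ ℕ) :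
    MvPowerSeries.coeff m ((fneg ι (X j)) ^ k)
      = if m = single j (m j) then MvPowerSeries.coeff (single 0 (m j)) (ι ^ k) else 0 := by
  induction k generalizing m with
  | zero =>
    simp only [pow_zero]
    rw [MvPowerSeries.coeff_one, MvPowerSeries.coeff_one]
    by_cases hm : m = 0
    · subst hm; simp
    · rw [if_neg hm]
      by_cases hm2 : m = single j (m j)
      · rw [if_pos hm2, if_neg]
        intro h
        rw [Finsupp.single_eq_zero] at h
        exact hm (by rw [hm2, h, Finsupp.single_zero])
      · rw [if_neg hm2]
  | succ k ih =>
    rw [pow_succ', MvPowerSeries.coeff_mul]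
    by_cases hm : m = single j (m j)
    · rw [if_pos hm, pow_succ', MvPowerSeries.coeff_mul]
      apply Finset.sum_nbij'
        (i := fun p : (Fin n →₀ ℕ) × (Fin n →₀ ℕ) =>
          ((single (0 : Fin 1) (p.1 j), single (0 : Fin 1) (p.2 j)) : (Fin 1 →₀ ℕ) × (Fin 1 →₀ ℕ)))
        (j := fun p : (Fin 1 →₀ ℕ) × (Fin 1 →₀ ℕ) =>
          ((single j (p.1 0), single j (p.2 0)) : (Fin n →₀ ℕ) × (Fin n →₀ ℕ)))
      · rintro ⟨u, v⟩ huv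
        rw [Finset.HasAntidiagonal.mem_antidiagonal] at huv ⊢
        obtain ⟨hu, hv, huv'⟩ := aux_single_add_decomp (n := n) (j := j) (b := m j)
          (by rw [huv]; exact hm)
        simp only
        rw [← Finsupp.single_add, huv']
      · rintro ⟨u, v⟩ huv
        rw [Finset.HasAntidiagonal.mem_antidiagonal] at huv ⊢
        simp only
        rw [← Finsupp.single_add]
        have : u 0 + v 0 = m j := by
          have := congrArg (fun w => w 0) huv
          simpa using this
        rw [this, ← hm]
      · rintro ⟨u, v⟩ huv
        rw [Finset.HasAntidiagonal.mem_antidiagonal] at huv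
        obtain ⟨hu, hv, huv'⟩ := aux_single_add_decomp (n := n) (j := j) (b := m j)
          (by rw [huv]; exact hm)
        simp only [Finsupp.single_eq_same, Prod.mk.injEq]
        exact ⟨hu.symm, hv.symm⟩
      · rintro ⟨u, v⟩ huv
        simp only [Finsupp.single_eq_same, Prod.mk.injEq]
        exact ⟨(aux_fin1_eq u).symm, (aux_fin1_eq v).symm⟩
      · rintro ⟨u, v⟩ huv
        rw [Finset.HasAntidiagonal.mem_antidiagonal] at huv
        obtain ⟨hu, hv, huv'⟩ := aux_single_add_decomp (n := n) (j := j) (b := m j)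
          (by rw [huv]; exact hm)
        simp only
        rw [aux_fneg_coeff ι hι1, ih, if_pos hu, if_pos hv]
    · rw [if_neg hm]
      apply Finset.sum_eq_zero
      rintro ⟨u, v⟩ huv
      rw [Finset.HasAntidiagonal.mem_antidiagonal] at huv
      rw [aux_fneg_coeff ι hι1, ih]
      by_cases hu : u = single j (u j)
      · by_cases hv : v = single j (v j)
        · exfalso
          apply hm
          rw [← huv, hu, hv, ← Finsupp.single_add]
          simp [Finsupp.single_apply]
        · rw [if_neg hv, mul_zero]
      · rw [if_neg hu, zero_mul]

theorem aux_degree_single {n : ℕ} (j : Fin n) (b : ℕ) : (single j b : Fin n →₀ ℕ).degree = b := by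
  rcases eq_or_ne b 0 with rfl | hb
  · simp [Finsupp.degree, Finsupp.single_zero]
  · rw [Finsupp.degree_single]

noncomputable def auxA (F : MvPowerSeries (Fin 2) S) (ι : MvPowerSeries (Fin 1) S)
    (a b : ℕ) : S :=
  ∑ q ∈ Finset.range (b+1),
    MvPowerSeries.coeff (single 0 a + single 1 q) F
      * MvPowerSeries.coeff (single 0 b) (ι ^ q)

theorem aux_XiNq {n : ℕ} (ι : MvPowerSeries (Fin 1) S)
    (hι1 : MvPowerSeries.constantCoeff ι = 0) {i j : Fin n} (hij : i ≠ j)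
    (p q : ℕ) (m : Fin n →₀ ℕ) :
    MvPowerSeries.coeff m ((X i : MvPowerSeries (Fin n) S) ^ p * (fneg ι (X j)) ^ q)
      = if m = single i p + single j (m j)
        then MvPowerSeries.coeff (single 0 (m j)) (ι ^ q) else 0 := by
  rw [MvPowerSeries.X_pow_eq, MvPowerSeries.coeff_monomial_mul]
  by_cases hm : m = single i p + single j (m j)
  · have hle : single i p ≤ m := by
      rw [Finsupp.le_def]
      intro s
      rw [hm]
      simp
    rw [if_pos hle, if_pos hm, one_mul, aux_fneg_pow ι hι1]
    have hcomp : ∀ s, m s = (single i p : Fin n →₀ ℕ) s + (single j (m j) : Fin n →₀ ℕ) s :=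
      fun s => congrArg (fun w => w s) hm
    have hsub : m - single i p = single j (m j) := by
      apply Finsupp.ext; intro s
      rw [Finsupp.tsub_apply]
      have hthis := hcomp s
      by_cases hsi : s = i
      · rw [hsi] at hthis ⊢
        have h2 : (single j (m j) : Fin n →₀ ℕ) i = 0 := by
          rw [Finsupp.single_apply, if_neg (Ne.symm hij)]
        rw [Finsupp.single_eq_same] at hthis ⊢
        rw [h2] at hthis ⊢
        omega
      · have h1 : (single i p : Fin n →₀ ℕ) s = 0 := by
          rw [Finsupp.single_apply, if_neg (fun h => hsi h.symm)]
        rw [h1] at hthis ⊢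
        omega
    rw [hsub, Finsupp.single_eq_same, if_pos rfl]
  · rw [if_neg hm]
    by_cases hle : single i p ≤ m
    · rw [if_pos hle, one_mul, aux_fneg_pow ι hι1]
      rw [if_neg]
      intro h
      apply hm
      have h3 : (m - single i p) j = m j := by
        rw [Finsupp.tsub_apply, Finsupp.single_apply, if_neg hij]
        omega
      rw [h3] at h
      have h2 : m = single i p + (m - single i p) := (add_tsub_cancel_of_le hle).symm
      exact h2.trans (by rw [h])
    · rw [if_neg hle]

theorem aux_fsub_coeff {n : ℕ} (F : MvPowerSeries (Fin 2) S) (ι : MvPowerSeries (Fin 1) S)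
    (hι1 : MvPowerSeries.constantCoeff ι = 0) {i j : Fin n} (hij : i ≠ j)
    (m : Fin n →₀ ℕ) :
    MvPowerSeries.coeff m (fsub F ι (X i) (X j))
      = if m = single i (m i) + single j (m j) then auxA F ι (m i) (m j) else 0 := by
  rw [fsub, aux_msubst_coeff2]
  have ha0 : (![(X i : MvPowerSeries (Fin n) S), fneg ι (X j)]) 0 = X i := rfl
  have ha1 : (![(X i : MvPowerSeries (Fin n) S), fneg ι (X j)]) 1 = fneg ι (X j) := rfl
  simp only [ha0, ha1]
  have key : ∀ p q : ℕ, MvPowerSeries.coeff (single 0 p + single 1 q) F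
        * MvPowerSeries.coeff m ((X i : MvPowerSeries (Fin n) S) ^ p * (fneg ι (X j)) ^ q)
      = if m = single i p + single j (m j)
        then MvPowerSeries.coeff (single 0 p + single 1 q) F
          * MvPowerSeries.coeff (single 0 (m j)) (ι ^ q) else 0 := by
    intro p q
    rw [aux_XiNq ι hι1 hij]
    split_ifs <;> simp
  have hpmi : ∀ p, m = single i p + single j (m j) → p = m i := by
    intro p hp
    have h := congrArg (fun w => w i) hp
    have h2 : m i = p := by simpa [Finsupp.single_apply, if_neg (Ne.symm hij)] using h
    exact h2.symm
  by_cases hm : m = single i (m i) + single j (m j)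
  · rw [if_pos hm]
    rw [Finset.sum_eq_single_of_mem (m i)
      (Finset.mem_range.mpr (Nat.lt_succ_of_le (Finsupp.le_degree i m)))]
    · have : ∀ q ∈ Finset.range (m.degree + 1),
          MvPowerSeries.coeff (single 0 (m i) + single 1 q) F
            * MvPowerSeries.coeff m ((X i : MvPowerSeries (Fin n) S) ^ (m i) * (fneg ι (X j)) ^ q)
          = MvPowerSeries.coeff (single 0 (m i) + single 1 q) F
            * MvPowerSeries.coeff (single 0 (m j)) (ι ^ q) := by
        intro q _
        rw [key, if_pos hm]
      rw [Finset.sum_congr rfl this, auxA]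
      apply (Finset.sum_subset _ _).symm
      · apply Finset.range_subset_range.mpr
        exact Nat.succ_le_succ (Finsupp.le_degree j m)
      · intro q _ hq
        rw [Finset.mem_range, Nat.lt_succ_iff, not_le] at hq
        rw [aux_coeff_pow hι1 (by rw [aux_degree_single]; exact hq), mul_zero]
    · intro p _ hp
      apply Finset.sum_eq_zero
      intro q _
      rw [key, if_neg]
      intro h
      exact hp (hpmi p h)
  · rw [if_neg hm]
    apply Finset.sum_eq_zero
    intro p _
    apply Finset.sum_eq_zero
    intro q _
    rw [key, if_neg]
    intro h
    rw [hpmi p h] at h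
    exact hm h

theorem aux_A_one (F : MvPowerSeries (Fin 2) S) (hF : IsFormalGroupLaw F)
    (ι : MvPowerSeries (Fin 1) S) : auxA F ι 1 0 = 1 := by
  have h := hF.2.2.1
  have h1 := congrArg (MvPowerSeries.coeff (single (0 : Fin 2) 1)) h
  rw [aux_msubst_coeff2] at h1
  rw [aux_degree_single] at h1
  have ha0 : (![(X 0 : MvPowerSeries (Fin 2) S), 0]) 0 = X 0 := rfl
  have ha1 : (![(X 0 : MvPowerSeries (Fin 2) S), 0]) 1 = 0 := rfl
  rw [ha0, ha1] at h1
  have hc : ∀ p q : ℕ, MvPowerSeries.coeff (single (0 : Fin 2) 1)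
        ((X 0 : MvPowerSeries (Fin 2) S) ^ p * (0 : MvPowerSeries (Fin 2) S) ^ q)
      = if p = 1 ∧ q = 0 then 1 else 0 := by
    intro p q
    rcases Nat.eq_zero_or_pos q with rfl | hq
    · rw [pow_zero, mul_one, MvPowerSeries.X_pow_eq, MvPowerSeries.coeff_monomial]
      by_cases hp : p = 1
      · subst hp; simp
      · rw [if_neg, if_neg]
        · simp [hp]
        · intro hcon
          apply hp
          have h5 : (1:ℕ) = p := by
            have := congrArg (fun w => w (0 : Fin 2)) hcon
            simpa using this
          exact h5.symm
    · rw [zero_pow (Nat.pos_iff_ne_zero.mp hq), mul_zero, map_zero]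
      rw [if_neg]
      rintro ⟨-, rfl⟩
      exact absurd hq (by simp)
  simp only [hc] at h1
  rw [Finset.sum_range_succ, Finset.sum_range_succ, Finset.sum_range_succ,
    Finset.sum_range_succ, Finset.sum_range_zero, Finset.sum_range_zero] at h1
  norm_num at h1
  rw [auxA, Finset.sum_range_one, pow_zero]
  have hcoeff1 : MvPowerSeries.coeff (single (0:Fin 1) 0) (1 : MvPowerSeries (Fin 1) S) = 1 := by
    rw [Finsupp.single_zero]
    simp
  rw [hcoeff1, mul_one]
  rw [Finsupp.single_zero, add_zero]
  exact h1

theorem aux_A_diag (F : MvPowerSeries (Fin 2) S) (ι : MvPowerSeries (Fin 1) S)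
    (hι : IsFormalInverse F ι) (b : ℕ) :
    ∑ t ∈ Finset.range (b+1), auxA F ι t (b - t) = 0 := by
  have h := hι.2
  have h1 := congrArg (MvPowerSeries.coeff (single (0 : Fin 1) b)) h
  rw [aux_msubst_coeff2, aux_degree_single, map_zero] at h1
  have ha0 : (![(X 0 : MvPowerSeries (Fin 1) S), ι]) 0 = X 0 := rfl
  have ha1 : (![(X 0 : MvPowerSeries (Fin 1) S), ι]) 1 = ι := rfl
  rw [ha0, ha1] at h1
  rw [← h1]
  apply Finset.sum_congr rfl
  intro p hp
  rw [Finset.mem_range, Nat.lt_succ_iff] at hp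
  have hterm : ∀ q : ℕ, MvPowerSeries.coeff (single (0:Fin 1) b)
        ((X 0 : MvPowerSeries (Fin 1) S) ^ p * ι ^ q)
      = MvPowerSeries.coeff (single (0:Fin 1) (b - p)) (ι ^ q) := by
    intro q
    rw [MvPowerSeries.X_pow_eq, MvPowerSeries.coeff_monomial_mul, if_pos, one_mul]
    · congr 1
      rw [Finsupp.single_tsub]
    · rw [Finsupp.le_def]
      intro s
      have hs : s = 0 := Fin.fin_one_eq_zero s
      subst hs
      simpa using hp
  simp only [hterm]
  rw [auxA]
  apply Finset.sum_subset
  · apply Finset.range_subset_range.mpr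
    omega
  · intro q _ hq
    rw [Finset.mem_range, Nat.lt_succ_iff, not_le] at hq
    rw [aux_coeff_pow hι.1 (by rw [aux_degree_single]; exact hq), mul_zero]

theorem aux_X_sub_X_regular {n : ℕ} {i j : Fin n} (hij : i ≠ j) :
    (X i - X j : MvPowerSeries (Fin n) S) ∈ nonZeroDivisors (MvPowerSeries (Fin n) S) := by
  rw [mem_nonZeroDivisors_iff_right]
  intro u hu
  suffices hgen : ∀ b : ℕ, ∀ m : Fin n →₀ ℕ, m j = b → MvPowerSeries.coeff m u = 0 by
    apply MvPowerSeries.ext; intro m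
    rw [map_zero]; exact hgen (m j) m rfl
  intro b
  induction b using Nat.strong_induction_on with
  | _ b ih =>
    intro m hmb
    have h0 := congrArg (MvPowerSeries.coeff (m + single i 1)) hu
    rw [map_zero, mul_sub, map_sub] at h0
    rw [MvPowerSeries.X_def, MvPowerSeries.X_def] at h0
    rw [MvPowerSeries.coeff_mul_monomial, MvPowerSeries.coeff_mul_monomial] at h0
    rw [if_pos le_add_self, add_tsub_cancel_right, mul_one] at h0
    have hji : ((single j 1 : Fin n →₀ ℕ) ≤ m + single i 1) ↔ 1 ≤ m j := by
      constructor
      · intro h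
        have := (Finsupp.le_def.mp h) j
        simpa [Finsupp.single_apply, hij] using this
      · intro h
        rw [Finsupp.le_def]
        intro s
        rcases eq_or_ne s j with rfl | hsj
        · simpa [Finsupp.single_apply, hij] using h
        · simp [Finsupp.single_apply, Ne.symm hsj]
    rcases Nat.eq_zero_or_pos b with rfl | hb
    · rw [if_neg (by rw [hji]; omega), sub_zero] at h0
      exact h0
    · rw [if_pos (hji.mpr (by omega)), mul_one, sub_eq_zero] at h0
      rw [h0]
      apply ih (b - 1) (by omega)
      rw [Finsupp.tsub_apply, Finsupp.add_apply, Finsupp.single_apply, Finsupp.single_apply,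
        if_neg hij, if_pos rfl]
      omega

theorem aux_ext_ij {n : ℕ} {i j : Fin n} (hij : i ≠ j) {a b : Fin n →₀ ℕ}
    (h1 : a i = b i) (h2 : a j = b j) (h3 : ∀ s, s ≠ i → s ≠ j → a s = b s) : a = b := by
  apply Finsupp.ext; intro s
  by_cases hsi : s = i
  · rw [hsi]; exact h1
  · by_cases hsj : s = j
    · rw [hsj]; exact h2
    · exact h3 s hsi hsj

theorem aux_f_diag {n : ℕ} (F : MvPowerSeries (Fin 2) S) (ι : MvPowerSeries (Fin 1) S)
    (hι : IsFormalInverse F ι) {i j : Fin n} (hij : i ≠ j)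
    (m : Fin n →₀ ℕ) (hmi : m i = 0) :
    ∑ t ∈ Finset.range (m j + 1),
      MvPowerSeries.coeff (m + single i t - single j t) (fsub F ι (X i) (X j)) = 0 := by
  have happ : ∀ (t : ℕ) (s : Fin n), (m + single i t - single j t) s
      = m s + (single i t : Fin n →₀ ℕ) s - (single j t : Fin n →₀ ℕ) s := by
    intro t s; rw [Finsupp.tsub_apply, Finsupp.add_apply]
  have hki : ∀ t : ℕ, (m + single i t - single j t) i = t := by
    intro t
    rw [happ, hmi, Finsupp.single_eq_same, Finsupp.single_apply, if_neg (Ne.symm hij)]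
    omega
  have hkj : ∀ t : ℕ, (m + single i t - single j t) j = m j - t := by
    intro t
    rw [happ, Finsupp.single_eq_same, Finsupp.single_apply, if_neg hij]
    omega
  by_cases hm : m = single j (m j)
  · have hmk : ∀ t ∈ Finset.range (m j + 1),
        MvPowerSeries.coeff (m + single i t - single j t) (fsub F ι (X i) (X j))
          = auxA F ι t (m j - t) := by
      intro t ht
      rw [Finset.mem_range, Nat.lt_succ_iff] at ht
      have hcond : m + single i t - single j t = single i t + single j (m j - t) := by
        apply aux_ext_ij hij
        · rw [hki, Finsupp.add_apply, Finsupp.single_eq_same, Finsupp.single_apply,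
            if_neg (Ne.symm hij), add_zero]
        · rw [hkj, Finsupp.add_apply, Finsupp.single_eq_same, Finsupp.single_apply,
            if_neg hij, zero_add]
        · intro s hsi hsj
          rw [happ, Finsupp.add_apply]
          have e1 : (single i t : Fin n →₀ ℕ) s = 0 := by
            rw [Finsupp.single_apply, if_neg (fun h => hsi h.symm)]
          have e2 : (single j t : Fin n →₀ ℕ) s = 0 := by
            rw [Finsupp.single_apply, if_neg (fun h => hsj h.symm)]
          have e3 : (single j (m j - t) : Fin n →₀ ℕ) s = 0 := by
            rw [Finsupp.single_apply, if_neg (fun h => hsj h.symm)]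
          have e4 : (single j (m j) : Fin n →₀ ℕ) s = 0 := by
            rw [Finsupp.single_apply, if_neg (fun h => hsj h.symm)]
          rw [e1, e2, e3]
          have hms := DFunLike.congr_fun hm s
          rw [e4] at hms
          omega
      rw [aux_fsub_coeff F ι hι.1 hij, hki, hkj, if_pos hcond]
    rw [Finset.sum_congr rfl hmk]
    exact aux_A_diag F ι hι (m j)
  · apply Finset.sum_eq_zero
    intro t ht
    rw [Finset.mem_range, Nat.lt_succ_iff] at ht
    rw [aux_fsub_coeff F ι hι.1 hij, if_neg]
    intro hc
    apply hm
    apply aux_ext_ij hij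
    · rw [hmi, Finsupp.single_apply, if_neg (Ne.symm hij)]
    · rw [Finsupp.single_eq_same]
    · intro s hsi hsj
      have hcs := DFunLike.congr_fun hc s
      rw [happ, Finsupp.add_apply] at hcs
      have e1 : (single i t : Fin n →₀ ℕ) s = 0 := by
        rw [Finsupp.single_apply, if_neg (fun h => hsi h.symm)]
      have e2 : (single j t : Fin n →₀ ℕ) s = 0 := by
        rw [Finsupp.single_apply, if_neg (fun h => hsj h.symm)]
      have e3 : (single i (((m + single i t - single j t)) i) : Fin n →₀ ℕ) s = 0 := by
        rw [Finsupp.single_apply, if_neg (fun h => hsi h.symm)]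
      have e4 : (single j (((m + single i t - single j t)) j) : Fin n →₀ ℕ) s = 0 := by
        rw [Finsupp.single_apply, if_neg (fun h => hsj h.symm)]
      rw [e1, e2, e3, e4] at hcs
      rw [Finsupp.single_apply, if_neg (fun h => hsj h.symm)]
      omega

noncomputable def auxg (F : MvPowerSeries (Fin 2) S) (ι : MvPowerSeries (Fin 1) S)
    {n : ℕ} (i j : Fin n) : MvPowerSeries (Fin n) S :=
  fun m => ∑ t ∈ Finset.range (m j + 1),
    MvPowerSeries.coeff (m + single i (t+1) - single j t) (fsub F ι (X i) (X j))

theorem aux_g_coeff (F : MvPowerSeries (Fin 2) S) (ι : MvPowerSeries (Fin 1) S)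
    {n : ℕ} (i j : Fin n) (m : Fin n →₀ ℕ) :
    MvPowerSeries.coeff m (auxg F ι i j)
      = ∑ t ∈ Finset.range (m j + 1),
          MvPowerSeries.coeff (m + single i (t+1) - single j t) (fsub F ι (X i) (X j)) := rfl

theorem aux_factor {n : ℕ} (F : MvPowerSeries (Fin 2) S) (ι : MvPowerSeries (Fin 1) S)
    (hι : IsFormalInverse F ι) {i j : Fin n} (hij : i ≠ j) :
    fsub F ι (X i) (X j) = (X i - X j : MvPowerSeries (Fin n) S) * auxg F ι i j := by
  apply MvPowerSeries.ext; intro m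
  rw [sub_mul, map_sub, MvPowerSeries.X_def, MvPowerSeries.X_def,
    MvPowerSeries.coeff_monomial_mul, MvPowerSeries.coeff_monomial_mul]
  have hle : ∀ s : Fin n, ((single s 1 : Fin n →₀ ℕ) ≤ m) ↔ 1 ≤ m s := by
    intro s
    constructor
    · intro h
      simpa using (Finsupp.le_def.mp h) s
    · intro h
      rw [Finsupp.le_def]
      intro r
      rw [Finsupp.single_apply]
      by_cases hsr : s = r
      · rw [if_pos hsr, ← hsr]; exact h
      · rw [if_neg hsr]; omega
  have hsubj : ∀ s : Fin n, ((m - single s 1 : Fin n →₀ ℕ)) j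
      = m j - (single s 1 : Fin n →₀ ℕ) j := by
    intro s; rw [Finsupp.tsub_apply]
  by_cases hmi : 1 ≤ m i
  · rw [if_pos ((hle i).mpr hmi), one_mul]
    by_cases hmj : 1 ≤ m j
    · rw [if_pos ((hle j).mpr hmj), one_mul]
      have hsum1 : MvPowerSeries.coeff (m - single i 1) (auxg F ι i j)
          = ∑ t ∈ Finset.range (m j + 1),
              MvPowerSeries.coeff (m + single i t - single j t) (fsub F ι (X i) (X j)) := by
        rw [aux_g_coeff]
        have h1 : ((m - single i 1 : Fin n →₀ ℕ)) j = m j := by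
          rw [hsubj, Finsupp.single_apply, if_neg hij]
          omega
        rw [h1]
        apply Finset.sum_congr rfl
        intro t _
        refine congrArg (fun d => MvPowerSeries.coeff d (fsub F ι (X i) (X j))) ?_
        apply aux_ext_ij hij
        · simp only [Finsupp.tsub_apply, Finsupp.add_apply, Finsupp.single_eq_same,
            Finsupp.single_apply, if_neg (Ne.symm hij)]
          omega
        · simp only [Finsupp.tsub_apply, Finsupp.add_apply, Finsupp.single_eq_same,
            Finsupp.single_apply, if_neg hij]
          omega
        · intro s hsi hsj
          have hi' : (i = s) = False := eq_false (fun h => hsi h.symm)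
          have hj' : (j = s) = False := eq_false (fun h => hsj h.symm)
          simp only [Finsupp.tsub_apply, Finsupp.add_apply, Finsupp.single_apply, hi', hj', if_false]
          omega
      have hsum2 : MvPowerSeries.coeff (m - single j 1) (auxg F ι i j)
          = ∑ t ∈ Finset.range (m j),
              MvPowerSeries.coeff (m + single i (t+1) - single j (t+1))
                (fsub F ι (X i) (X j)) := by
        rw [aux_g_coeff]
        have h2 : ((m - single j 1 : Fin n →₀ ℕ)) j + 1 = m j := by
          rw [hsubj, Finsupp.single_eq_same]
          omega
        rw [h2]
        apply Finset.sum_congr rfl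
        intro t ht
        rw [Finset.mem_range] at ht
        refine congrArg (fun d => MvPowerSeries.coeff d (fsub F ι (X i) (X j))) ?_
        apply aux_ext_ij hij
        · simp only [Finsupp.tsub_apply, Finsupp.add_apply, Finsupp.single_eq_same,
            Finsupp.single_apply, if_neg (Ne.symm hij)]
          omega
        · simp only [Finsupp.tsub_apply, Finsupp.add_apply, Finsupp.single_eq_same,
            Finsupp.single_apply, if_neg hij]
          omega
        · intro s hsi hsj
          have hi' : (i = s) = False := eq_false (fun h => hsi h.symm)
          have hj' : (j = s) = False := eq_false (fun h => hsj h.symm)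
          simp only [Finsupp.tsub_apply, Finsupp.add_apply, Finsupp.single_apply, hi', hj', if_false]
          omega
      rw [hsum1, hsum2, Finset.sum_range_succ']
      simp only [Finsupp.single_zero, add_zero, tsub_zero]
      exact (add_sub_cancel_left _ _).symm
    · rw [if_neg (fun h => hmj ((hle j).mp h)), sub_zero]
      rw [aux_g_coeff]
      have h1 : ((m - single i 1 : Fin n →₀ ℕ)) j = m j := by
        rw [hsubj, Finsupp.single_apply, if_neg hij]
        omega
      have h0 : m j = 0 := by omega
      rw [h1, h0, Finset.sum_range_one]
      refine congrArg (fun d => MvPowerSeries.coeff d (fsub F ι (X i) (X j))) ?_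
      apply aux_ext_ij hij
      · simp only [Finsupp.tsub_apply, Finsupp.add_apply, Finsupp.single_eq_same,
          Finsupp.single_apply, if_neg (Ne.symm hij)]
        omega
      · simp only [Finsupp.tsub_apply, Finsupp.add_apply, Finsupp.single_eq_same,
          Finsupp.single_apply, if_neg hij]
        omega
      · intro s hsi hsj
        have hi' : (i = s) = False := eq_false (fun h => hsi h.symm)
        have hj' : (j = s) = False := eq_false (fun h => hsj h.symm)
        simp only [Finsupp.tsub_apply, Finsupp.add_apply, Finsupp.single_apply, hi', hj', if_false]
        omega
  · have hmi0 : m i = 0 := by omega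
    rw [if_neg (fun h => hmi ((hle i).mp h)), zero_sub]
    have hd := aux_f_diag F ι hι hij m hmi0
    rw [Finset.sum_range_succ'] at hd
    simp only [Finsupp.single_zero, add_zero, tsub_zero] at hd
    by_cases hmj : 1 ≤ m j
    · rw [if_pos ((hle j).mpr hmj), one_mul]
      have hsum2 : MvPowerSeries.coeff (m - single j 1) (auxg F ι i j)
          = ∑ t ∈ Finset.range (m j),
              MvPowerSeries.coeff (m + single i (t+1) - single j (t+1))
                (fsub F ι (X i) (X j)) := by
        rw [aux_g_coeff]
        have h2 : ((m - single j 1 : Fin n →₀ ℕ)) j + 1 = m j := by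
          rw [hsubj, Finsupp.single_eq_same]
          omega
        rw [h2]
        apply Finset.sum_congr rfl
        intro t ht
        rw [Finset.mem_range] at ht
        refine congrArg (fun d => MvPowerSeries.coeff d (fsub F ι (X i) (X j))) ?_
        apply aux_ext_ij hij
        · simp only [Finsupp.tsub_apply, Finsupp.add_apply, Finsupp.single_eq_same,
            Finsupp.single_apply, if_neg (Ne.symm hij)]
          omega
        · simp only [Finsupp.tsub_apply, Finsupp.add_apply, Finsupp.single_eq_same,
            Finsupp.single_apply, if_neg hij]
          omega
        · intro s hsi hsj
          have hi' : (i = s) = False := eq_false (fun h => hsi h.symm)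
          have hj' : (j = s) = False := eq_false (fun h => hsj h.symm)
          simp only [Finsupp.tsub_apply, Finsupp.add_apply, Finsupp.single_apply, hi', hj', if_false]
          omega
      rw [hsum2]
      exact eq_neg_of_add_eq_zero_right hd
    · rw [if_neg (fun h => hmj ((hle j).mp h)), neg_zero]
      have h0 : m j = 0 := by omega
      rw [h0, Finset.sum_range_zero, zero_add] at hd
      exact hd

/-- `x_i −_F x_{i+1}` is a non-zero-divisor of `R = S[[x_1,…,x_n]]`. -/
theorem fsub_X_mem_nonZeroDivisors
    (F : MvPowerSeries (Fin 2) S) (hF : IsFormalGroupLaw F)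
    (ι : MvPowerSeries (Fin 1) S) (hι : IsFormalInverse F ι)
    {n : ℕ} (i j : Fin n) (hij : (i : ℕ) + 1 = (j : ℕ)) :
    fsub F ι (X i : MvPowerSeries (Fin n) S) (X j)
      ∈ nonZeroDivisors (MvPowerSeries (Fin n) S) := by
  have hij' : i ≠ j := by
    intro h
    rw [h] at hij
    omega
  rw [aux_factor F ι hι hij']
  apply mul_mem (aux_X_sub_X_regular hij')
  apply MvPowerSeries.mem_nonZeroDivisors_of_constantCoeff
  have h0 : MvPowerSeries.constantCoeff (auxg F ι i j) = 1 := by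
    rw [← MvPowerSeries.coeff_zero_eq_constantCoeff_apply, aux_g_coeff]
    have hz : (0 : Fin n →₀ ℕ) j = 0 := rfl
    rw [hz, Finset.sum_range_one, Finsupp.single_zero, tsub_zero, zero_add]
    rw [aux_fsub_coeff F ι hι.1 hij']
    have e1 : (single i 1 : Fin n →₀ ℕ) i = 1 := Finsupp.single_eq_same
    have e2 : (single i 1 : Fin n →₀ ℕ) j = 0 := by
      rw [Finsupp.single_apply, if_neg hij']
    rw [e1, e2, Finsupp.single_zero, add_zero, if_pos rfl]
    exact aux_A_one F hF ι
  rw [h0]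
  exact one_mem _
end
end
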